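/- arXiv:1204.2234 — 2 statements merged into one kernel-verified Lean document; each statement's English description precedes it below -/
import Mathlib

section
/- Under the cone-field hypotheses (|c(x)| ≥ γ for all x, and inf_x ‖A(x)‖ = λ > ρ = 1/γ + √(1/γ²-1)), for any z with |z| > λ₁ > ρ the vector growth satisfies ‖Λ U (z,1)ᵀ‖ / ‖(z,1)ᵀ‖ ≥ λ/(2λ₁); consequently the Lyapunov exponent of the cocycle satisfies L(α, A) ≥ log λ - log(2ρ). -/
open Matrix Complex

noncomputable def opNorm (A : Matrix (Fin 2) (Fin 2) ℂ) : ℝ :=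
  ‖Matrix.toEuclideanCLM (n := Fin 2) (𝕜 := ℂ) A‖

noncomputable def cocycleProd (A : ℝ → Matrix (Fin 2) (Fin 2) ℂ) (α : ℝ) (n : ℕ) (x : ℝ) :
    Matrix (Fin 2) (Fin 2) ℂ :=
  ((List.range n).map (fun j => A (x + (n - 1 - j : ℕ) * α))).prod

noncomputable def lyapRot (α : ℝ) (A : ℝ → Matrix (Fin 2) (Fin 2) ℂ) : ℝ :=
  ⨅ n : ℕ+, (1 / (n : ℝ)) * ∫ x in (0:ℝ)..1, Real.log (opNorm (cocycleProd A α n x))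

noncomputable def vecNorm (v : Fin 2 → ℂ) : ℝ :=
  Real.sqrt (‖v 0‖ ^ 2 + ‖v 1‖ ^ 2)

lemma vecNorm_eq_norm (v : Fin 2 → ℂ) :
    vecNorm v = ‖(WithLp.equiv 2 (Fin 2 → ℂ)).symm v‖ := by
  rw [EuclideanSpace.norm_eq, vecNorm]
  simp [Fin.sum_univ_two]

lemma vecNorm_mulVec_le (M : Matrix (Fin 2) (Fin 2) ℂ) (v : Fin 2 → ℂ) :
    vecNorm (M.mulVec v) ≤ opNorm M * vecNorm v := by
  rw [vecNorm_eq_norm, vecNorm_eq_norm, WithLp.equiv_symm_apply,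
    ← Matrix.toEuclideanCLM_toLp]
  exact ContinuousLinearMap.le_opNorm _ _

lemma re_dot (v : Fin 2 → ℂ) :
    (star v ⬝ᵥ v).re = ‖v 0‖ ^ 2 + ‖v 1‖ ^ 2 := by
  have h : ∀ z : ℂ, ((starRingEnd ℂ) z * z).re = ‖z‖ ^ 2 := by
    intro z
    rw [mul_comm, Complex.mul_conj]
    simp [Complex.normSq_eq_norm_sq, ← Complex.ofReal_pow]
  simp [dotProduct, Fin.sum_univ_two, Pi.star_apply, h]

lemma vecNorm_unitary (U : Matrix (Fin 2) (Fin 2) ℂ) (hU : Uᴴ * U = 1) (v : Fin 2 → ℂ) :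
    vecNorm (U.mulVec v) = vecNorm v := by
  have h : star (U.mulVec v) ⬝ᵥ (U.mulVec v) = star v ⬝ᵥ v := by
    rw [Matrix.star_mulVec, Matrix.dotProduct_mulVec, Matrix.vecMul_vecMul, hU,
      Matrix.vecMul_one]
  rw [vecNorm, vecNorm, ← re_dot, ← re_dot, h]

lemma opNorm_continuous : Continuous fun M : Matrix (Fin 2) (Fin 2) ℂ => opNorm M := by
  exact continuous_norm.comp (LinearMap.continuous_of_finiteDimensional
    (⟨⟨fun M => Matrix.toEuclideanCLM (n := Fin 2) (𝕜 := ℂ) M,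
      by intro x y; simp [map_add]⟩, by intro m x; simp [_root_.map_smul]⟩ :
      Matrix (Fin 2) (Fin 2) ℂ →ₗ[ℂ]
        (EuclideanSpace ℂ (Fin 2) →L[ℂ] EuclideanSpace ℂ (Fin 2))))

lemma abs_fst_le_vecNorm (w : Fin 2 → ℂ) : ‖w 0‖ ≤ vecNorm w := by
  calc ‖w 0‖ = Real.sqrt (‖w 0‖ ^ 2) :=
        (Real.sqrt_sq (norm_nonneg (w 0))).symm
    _ ≤ vecNorm w := Real.sqrt_le_sqrt (by nlinarith [sq_nonneg (‖w 1‖)])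

lemma vecNorm_le_sum (w : Fin 2 → ℂ) :
    vecNorm w ≤ ‖w 0‖ + ‖w 1‖ := by
  calc vecNorm w ≤ Real.sqrt ((‖w 0‖ + ‖w 1‖) ^ 2) :=
        Real.sqrt_le_sqrt
          (by nlinarith [norm_nonneg (w 0), norm_nonneg (w 1)])
    _ = ‖w 0‖ + ‖w 1‖ := Real.sqrt_sq (by positivity)

lemma arith_growth (γ s r a b : ℝ) (hs0 : 0 ≤ s) (h1 : 1 + s ≤ γ * r) (hr1 : 1 ≤ r)
    (hb : 0 ≤ b) (hab : r * b ≤ a) : a + b ≤ 2 * r * (γ * a - s * b) := by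
  have ha : 0 ≤ a := le_trans (mul_nonneg (by linarith) hb) hab
  nlinarith [mul_nonneg (sub_nonneg.2 h1) ha, mul_nonneg hs0 (sub_nonneg.2 hab),
    mul_nonneg hb (sub_nonneg.2 hr1)]

lemma arith_cone (lam g h a b : ℝ) (hg0 : 0 < g) (hh0 : 0 ≤ h)
    (hgh : g ^ 2 + h ^ 2 = 1) (hgl : 1 + h ≤ g * lam) (hb : 0 ≤ b) (hab : lam * b ≤ a) :
    h * a + g * b ≤ lam * (g * a - h * b) := by
  have hg1 : g ≤ 1 := by nlinarith
  have hh1 : h ≤ 1 := by nlinarith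
  have hlam0 : 0 < lam := by nlinarith
  have ha : 0 ≤ a := le_trans (mul_nonneg hlam0.le hb) hab
  have k1 : g ≤ lam * (1 - h) := by
    have k0 : g * g ≤ g * (lam * (1 - h)) := by
      nlinarith [mul_le_mul_of_nonneg_right hgl (sub_nonneg.2 hh1)]
    exact le_of_mul_le_mul_left k0 hg0
  have k2 : 0 ≤ g * lam ^ 2 - 2 * lam * h - g := by
    nlinarith [mul_le_mul_of_nonneg_left hgl hlam0.le]
  have k3 : 0 ≤ lam * g - h := by nlinarith
  nlinarith [mul_nonneg (sub_nonneg.2 hab) k3, mul_nonneg hb k2]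

lemma step_lemma (γ s ρ lam N : ℝ) (c d : ℂ) (w w' : Fin 2 → ℂ)
    (hγ0 : 0 < γ) (hs0 : 0 ≤ s) (hs2 : s ^ 2 = 1 - γ ^ 2)
    (hγρ : γ * ρ = 1 + s) (hρ1 : 1 ≤ ρ) (hρlam : ρ ≤ lam) (hNlam : lam ≤ N)
    (hc : γ ≤ ‖c‖) (hcd : ‖c‖ ^ 2 + ‖d‖ ^ 2 = 1)
    (hw'0 : w' 0 = ((N : ℝ) : ℂ) * (c * w 0 - (starRingEnd ℂ) d * w 1))
    (hw'1 : w' 1 = (((N⁻¹ : ℝ)) : ℂ) * (d * w 0 + (starRingEnd ℂ) c * w 1))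
    (hw : lam * ‖w 1‖ ≤ ‖w 0‖) :
    lam * ‖w' 1‖ ≤ ‖w' 0‖ ∧
      lam / (2 * ρ) * vecNorm w ≤ vecNorm w' := by
  set a := ‖w 0‖ with ha_def
  set b := ‖w 1‖ with hb_def
  set g := ‖c‖ with hg_def
  set h := ‖d‖ with hh_def
  have hb : 0 ≤ b := norm_nonneg _
  have hh0 : 0 ≤ h := norm_nonneg _
  have hg0 : 0 < g := lt_of_lt_of_le hγ0 hc
  have hlam0 : 0 < lam := by linarith
  have hN0 : 0 < N := by linarith
  have ha : 0 ≤ a := norm_nonneg _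
  have hhs : h ≤ s := by
    rw [← Real.sqrt_sq hh0, ← Real.sqrt_sq hs0]
    exact Real.sqrt_le_sqrt (by nlinarith)
  have hgl : 1 + h ≤ g * lam := by
    nlinarith [mul_le_mul_of_nonneg_left hρlam hγ0.le,
      mul_le_mul_of_nonneg_right hc hlam0.le]
  have hconeB : ρ * b ≤ a := le_trans (mul_le_mul_of_nonneg_right hρlam hb) hw
  have growth_ineq : a + b ≤ 2 * ρ * (γ * a - s * b) :=
    arith_growth γ s ρ a b hs0 (le_of_eq hγρ.symm) hρ1 hb hconeB
  have hγs_pos : 0 ≤ γ * a - s * b := by nlinarith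
  have hgh_ge : γ * a - s * b ≤ g * a - h * b := by nlinarith
  have cone_ineq : h * a + g * b ≤ lam * (g * a - h * b) :=
    arith_cone lam g h a b hg0 hh0 hcd hgl hb hw
  have habs0 : N * (g * a - h * b) ≤ ‖w' 0‖ := by
    rw [hw'0, norm_mul, Complex.norm_real, Real.norm_eq_abs, _root_.abs_of_nonneg hN0.le]
    have t1 : g * a - h * b ≤ ‖c * w 0 - (starRingEnd ℂ) d * w 1‖ := by
      have := norm_sub_norm_le (c * w 0) ((starRingEnd ℂ) d * w 1)
      simpa [norm_mul, Complex.norm_conj, ha_def, hb_def, hg_def, hh_def] using this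
    exact mul_le_mul_of_nonneg_left t1 hN0.le
  have habs1 : ‖w' 1‖ ≤ N⁻¹ * (h * a + g * b) := by
    rw [hw'1, norm_mul, Complex.norm_real, Real.norm_eq_abs,
      _root_.abs_of_nonneg (by positivity : (0:ℝ) ≤ N⁻¹)]
    have t1 : ‖d * w 0 + (starRingEnd ℂ) c * w 1‖ ≤ h * a + g * b := by
      have := norm_add_le (d * w 0) ((starRingEnd ℂ) c * w 1)
      simpa [norm_mul, Complex.norm_conj, ha_def, hb_def, hg_def, hh_def] using this
    exact mul_le_mul_of_nonneg_left t1 (by positivity)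
  have hgahb : 0 ≤ g * a - h * b := le_trans hγs_pos hgh_ge
  constructor
  · have c1 : lam * (N⁻¹ * (h * a + g * b)) ≤ N * (g * a - h * b) := by
      rw [show lam * (N⁻¹ * (h * a + g * b)) = lam * (h * a + g * b) / N by ring,
        div_le_iff₀ hN0]
      calc lam * (h * a + g * b) ≤ lam * (lam * (g * a - h * b)) :=
            mul_le_mul_of_nonneg_left cone_ineq hlam0.le
        _ = lam * lam * (g * a - h * b) := by ring
        _ ≤ N * N * (g * a - h * b) :=
            mul_le_mul_of_nonneg_right (mul_le_mul hNlam hNlam hlam0.le hN0.le) hgahb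
        _ = N * (g * a - h * b) * N := by ring
    calc lam * ‖w' 1‖ ≤ lam * (N⁻¹ * (h * a + g * b)) :=
          mul_le_mul_of_nonneg_left habs1 hlam0.le
      _ ≤ N * (g * a - h * b) := c1
      _ ≤ ‖w' 0‖ := habs0
  · have e1 : vecNorm w ≤ a + b := vecNorm_le_sum w
    have e2 : lam / (2 * ρ) * vecNorm w ≤ lam / (2 * ρ) * (a + b) :=
      mul_le_mul_of_nonneg_left e1 (by positivity)
    have e3 : lam / (2 * ρ) * (a + b) ≤ lam * (γ * a - s * b) := by
      rw [div_mul_eq_mul_div, div_le_iff₀ (by positivity : (0:ℝ) < 2 * ρ)]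
      calc lam * (a + b) ≤ lam * (2 * ρ * (γ * a - s * b)) :=
            mul_le_mul_of_nonneg_left growth_ineq hlam0.le
        _ = lam * (γ * a - s * b) * (2 * ρ) := by ring
    have e4 : lam * (γ * a - s * b) ≤ N * (g * a - h * b) :=
      calc lam * (γ * a - s * b) ≤ lam * (g * a - h * b) :=
            mul_le_mul_of_nonneg_left hgh_ge hlam0.le
        _ ≤ N * (g * a - h * b) := mul_le_mul_of_nonneg_right hNlam hgahb
    calc lam / (2 * ρ) * vecNorm w ≤ lam * (γ * a - s * b) := by linarith
      _ ≤ ‖w' 0‖ := le_trans e4 habs0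
      _ ≤ vecNorm w' := abs_fst_le_vecNorm w'

lemma cocycleProd_succ (A : ℝ → Matrix (Fin 2) (Fin 2) ℂ) (α : ℝ) (n : ℕ) (x : ℝ) :
    cocycleProd A α (n + 1) x = cocycleProd A α n (x + α) * A x := by
  unfold cocycleProd
  rw [List.range_succ, List.map_append, List.prod_append]
  simp only [List.map_cons, List.map_nil, List.prod_cons, List.prod_nil, mul_one]
  congr 1
  · refine congrArg List.prod (List.map_congr_left ?_)
    intro j hj
    have hj' : j < n := List.mem_range.mp hj
    have h1 : (n + 1 - 1 - j : ℕ) = n - j := by omega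
    have h2 : ((n - j : ℕ) : ℝ) = ((n - 1 - j : ℕ) : ℝ) + 1 := by
      have h3 : (n - j : ℕ) = (n - 1 - j) + 1 := by omega
      rw [h3]; push_cast; ring
    rw [h1]
    congr 1
    rw [h2]; ring
  · have h1 : (n + 1 - 1 - n : ℕ) = 0 := by omega
    rw [h1]
    norm_num


/-- Under the cone-field hypotheses (`|c(x)| ≥ γ`, `inf_x ‖A(x)‖ = λ > ρ = 1/γ+√(1/γ²-1)`),
the vector growth in the cone satisfies `‖ΛU(z,1)ᵀ‖/‖(z,1)ᵀ‖ ≥ λ/(2λ₁)`, and consequently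
`L(α,A) ≥ log λ - log(2ρ)`. -/
theorem cone_field_lyapunov_bound (α : ℝ) (A U₃ : ℝ → Matrix (Fin 2) (Fin 2) ℂ)
    (c d : ℝ → ℂ) (hA : Continuous A) (hper : ∀ x, A (x + 1) = A x)
    (hU₃ : ∀ x, (U₃ x)ᴴ * U₃ x = 1)
    (hcd : ∀ x, ‖c x‖ ^ 2 + ‖d x‖ ^ 2 = 1)
    (hdec : ∀ x, (U₃ (x + α))ᴴ * A x * U₃ x =
      (!![((opNorm (A x) : ℝ) : ℂ), 0; 0, (((opNorm (A x))⁻¹ : ℝ) : ℂ)]) *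
        !![c x, -(starRingEnd ℂ) (d x); d x, (starRingEnd ℂ) (c x)])
    (γ : ℝ) (hγ0 : 0 < γ) (hγ1 : γ < 1) (hc : ∀ x, γ ≤ ‖c x‖)
    (ρ : ℝ) (hρ : ρ = 1/γ + Real.sqrt (1/γ^2 - 1))
    (lam : ℝ) (hglb : IsGLB (Set.range fun x => opNorm (A x)) lam) (hlam : ρ < lam) :
    (∀ lam₁ : ℝ, ρ < lam₁ → ∀ z : ℂ, lam₁ < ‖z‖ → ∀ x : ℝ,
      lam / (2 * lam₁) * vecNorm ![z, 1] ≤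
        vecNorm ((( !![((opNorm (A x) : ℝ) : ℂ), 0; 0, (((opNorm (A x))⁻¹ : ℝ) : ℂ)] *
          !![c x, -(starRingEnd ℂ) (d x); d x, (starRingEnd ℂ) (c x)]).mulVec ![z, 1]))) ∧
    Real.log lam - Real.log (2 * ρ) ≤ lyapRot α A := by
  have hγ2 : γ ^ 2 ≤ 1 := by nlinarith
  set s : ℝ := Real.sqrt (1 - γ ^ 2) with hs_def
  have hs0 : 0 ≤ s := Real.sqrt_nonneg _
  have hs2 : s ^ 2 = 1 - γ ^ 2 := Real.sq_sqrt (by linarith)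
  have hγρ : γ * ρ = 1 + s := by
    have h2 : γ * Real.sqrt (1 / γ ^ 2 - 1) = s := by
      rw [hs_def, show (1 : ℝ) - γ ^ 2 = γ ^ 2 * (1 / γ ^ 2 - 1) by field_simp,
        Real.sqrt_mul (sq_nonneg γ), Real.sqrt_sq hγ0.le]
    rw [hρ, mul_add, mul_one_div, div_self (ne_of_gt hγ0), h2]
  have hρ1 : 1 ≤ ρ := by
    have h1 : 1 ≤ 1 / γ := by
      rw [le_div_iff₀ hγ0]; linarith
    have h2 := Real.sqrt_nonneg (1 / γ ^ 2 - 1)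
    rw [hρ]; linarith
  have hρ0 : 0 < ρ := by linarith
  have hlam0 : 0 < lam := by linarith
  have hNlam : ∀ y, lam ≤ opNorm (A y) := fun y => hglb.1 ⟨y, rfl⟩
  have hN0 : ∀ y, 0 < opNorm (A y) := fun y => lt_of_lt_of_le (by linarith) (hNlam y)
  have hds : ∀ y, ‖d y‖ ≤ s := by
    intro y
    have h1 := hcd y
    have h2 := hc y
    rw [← Real.sqrt_sq (norm_nonneg (d y)), ← Real.sqrt_sq hs0]
    exact Real.sqrt_le_sqrt (by nlinarith)
  have hent0 : ∀ (y : ℝ) (w : Fin 2 → ℂ),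
      ((!![((opNorm (A y) : ℝ) : ℂ), 0; 0, (((opNorm (A y))⁻¹ : ℝ) : ℂ)] * !![c y, -(starRingEnd ℂ) (d y); d y, (starRingEnd ℂ) (c y)]) *ᵥ w) 0 =
        ((opNorm (A y) : ℝ) : ℂ) * (c y * w 0 - (starRingEnd ℂ) (d y) * w 1) := by
    intro y w
    simp [Matrix.mul_fin_two, Matrix.mulVec, dotProduct, Fin.sum_univ_two]
    ring
  have hent1 : ∀ (y : ℝ) (w : Fin 2 → ℂ),
      ((!![((opNorm (A y) : ℝ) : ℂ), 0; 0, (((opNorm (A y))⁻¹ : ℝ) : ℂ)] * !![c y, -(starRingEnd ℂ) (d y); d y, (starRingEnd ℂ) (c y)]) *ᵥ w) 1 =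
        (((opNorm (A y))⁻¹ : ℝ) : ℂ) * (d y * w 0 + (starRingEnd ℂ) (c y) * w 1) := by
    intro y w
    simp [Matrix.mul_fin_two, Matrix.mulVec, dotProduct, Fin.sum_univ_two]
    ring
  have hstep : ∀ (y : ℝ) (w : Fin 2 → ℂ), lam * ‖w 1‖ ≤ ‖w 0‖ →
      lam * ‖((!![((opNorm (A y) : ℝ) : ℂ), 0; 0, (((opNorm (A y))⁻¹ : ℝ) : ℂ)] * !![c y, -(starRingEnd ℂ) (d y); d y, (starRingEnd ℂ) (c y)]) *ᵥ w) 1‖ ≤ ‖((!![((opNorm (A y) : ℝ) : ℂ), 0; 0, (((opNorm (A y))⁻¹ : ℝ) : ℂ)] * !![c y, -(starRingEnd ℂ) (d y); d y, (starRingEnd ℂ) (c y)]) *ᵥ w) 0‖ ∧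
        lam / (2 * ρ) * vecNorm w ≤ vecNorm ((!![((opNorm (A y) : ℝ) : ℂ), 0; 0, (((opNorm (A y))⁻¹ : ℝ) : ℂ)] * !![c y, -(starRingEnd ℂ) (d y); d y, (starRingEnd ℂ) (c y)]) *ᵥ w) :=
    fun y w hw => step_lemma γ s ρ lam (opNorm (A y)) (c y) (d y) w _ hγ0 hs0 hs2 hγρ hρ1
      hlam.le (hNlam y) (hc y) (hcd y) (hent0 y w) (hent1 y w) hw
  constructor
  · -- Part 1 : vector growth in the cone
    intro lam₁ hlam₁ z hz x
    have hlam₁0 : 0 < lam₁ := by linarith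
    have h1lam₁ : 1 ≤ lam₁ := by linarith
    have hγl : 1 + s ≤ γ * lam₁ := by
      nlinarith [mul_le_mul_of_nonneg_left (le_of_lt hlam₁) hγ0.le]
    have ht : lam₁ * 1 ≤ ‖z‖ := by rw [mul_one]; exact hz.le
    have growth := arith_growth γ s lam₁ (‖z‖) 1 hs0 hγl h1lam₁ zero_le_one ht
    have habsz : 0 ≤ ‖z‖ := norm_nonneg z
    have hz0 : 0 ≤ γ * ‖z‖ - s * 1 := by nlinarith
    have hgh_ge : γ * ‖z‖ - s * 1 ≤
        ‖c x‖ * ‖z‖ - ‖d x‖ * 1 := by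
      nlinarith [hc x, hds x]
    have key0 : opNorm (A x) * (‖c x‖ * ‖z‖ - ‖d x‖ * 1) ≤
        ‖((!![((opNorm (A x) : ℝ) : ℂ), 0; 0, (((opNorm (A x))⁻¹ : ℝ) : ℂ)] * !![c x, -(starRingEnd ℂ) (d x); d x, (starRingEnd ℂ) (c x)]) *ᵥ ![z, 1]) 0‖ := by
      rw [hent0 x ![z, 1], norm_mul, Complex.norm_real, Real.norm_eq_abs,
        _root_.abs_of_nonneg (hN0 x).le]
      refine mul_le_mul_of_nonneg_left ?_ (hN0 x).le
      have t1 := norm_sub_norm_le (c x * (![z, 1] : Fin 2 → ℂ) 0)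
        ((starRingEnd ℂ) (d x) * (![z, 1] : Fin 2 → ℂ) 1)
      simpa [norm_mul, Complex.norm_conj] using t1
    calc lam / (2 * lam₁) * vecNorm ![z, 1]
        ≤ lam / (2 * lam₁) * (‖z‖ + 1) := by
          refine mul_le_mul_of_nonneg_left ?_ (by positivity)
          simpa using vecNorm_le_sum ![z, 1]
      _ ≤ lam * (γ * ‖z‖ - s * 1) := by
          rw [div_mul_eq_mul_div, div_le_iff₀ (by positivity : (0:ℝ) < 2 * lam₁)]
          calc lam * (‖z‖ + 1)
              ≤ lam * (2 * lam₁ * (γ * ‖z‖ - s * 1)) := by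
                refine mul_le_mul_of_nonneg_left ?_ hlam0.le
                simpa using growth
            _ = lam * (γ * ‖z‖ - s * 1) * (2 * lam₁) := by ring
      _ ≤ opNorm (A x) * (‖c x‖ * ‖z‖ - ‖d x‖ * 1) := by
          calc lam * (γ * ‖z‖ - s * 1)
              ≤ lam * (‖c x‖ * ‖z‖ - ‖d x‖ * 1) :=
                mul_le_mul_of_nonneg_left hgh_ge hlam0.le
            _ ≤ opNorm (A x) * (‖c x‖ * ‖z‖ - ‖d x‖ * 1) :=
                mul_le_mul_of_nonneg_right (hNlam x) (le_trans hz0 hgh_ge)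
      _ ≤ ‖((!![((opNorm (A x) : ℝ) : ℂ), 0; 0, (((opNorm (A x))⁻¹ : ℝ) : ℂ)] * !![c x, -(starRingEnd ℂ) (d x); d x, (starRingEnd ℂ) (c x)]) *ᵥ ![z, 1]) 0‖ := key0
      _ ≤ vecNorm ((!![((opNorm (A x) : ℝ) : ℂ), 0; 0, (((opNorm (A x))⁻¹ : ℝ) : ℂ)] * !![c x, -(starRingEnd ℂ) (d x); d x, (starRingEnd ℂ) (c x)]) *ᵥ ![z, 1]) := abs_fst_le_vecNorm _
  · -- Part 2 : Lyapunov exponent bound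
    have hAU : ∀ y, A y * U₃ y = U₃ (y + α) * (!![((opNorm (A y) : ℝ) : ℂ), 0; 0, (((opNorm (A y))⁻¹ : ℝ) : ℂ)] * !![c y, -(starRingEnd ℂ) (d y); d y, (starRingEnd ℂ) (c y)]) := by
      intro y
      have h2 : U₃ (y + α) * (U₃ (y + α))ᴴ = 1 := mul_eq_one_comm.mp (hU₃ (y + α))
      calc A y * U₃ y = (U₃ (y + α) * (U₃ (y + α))ᴴ) * (A y * U₃ y) := by rw [h2, one_mul]
        _ = U₃ (y + α) * ((U₃ (y + α))ᴴ * A y * U₃ y) := by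
            simp only [Matrix.mul_assoc]
        _ = U₃ (y + α) * (!![((opNorm (A y) : ℝ) : ℂ), 0; 0, (((opNorm (A y))⁻¹ : ℝ) : ℂ)] * !![c y, -(starRingEnd ℂ) (d y); d y, (starRingEnd ℂ) (c y)]) := by rw [hdec y]
    have key : ∀ (n : ℕ) (x : ℝ) (w : Fin 2 → ℂ),
        lam * ‖w 1‖ ≤ ‖w 0‖ →
        ∃ w₂ : Fin 2 → ℂ, (cocycleProd A α n x) *ᵥ (U₃ x *ᵥ w) = U₃ (x + n * α) *ᵥ w₂ ∧
          lam * ‖w₂ 1‖ ≤ ‖w₂ 0‖ ∧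
          (lam / (2 * ρ)) ^ n * vecNorm w ≤ vecNorm w₂ := by
      intro n
      induction n with
      | zero =>
        intro x w hw
        exact ⟨w, by simp [cocycleProd], hw, by simp⟩
      | succ n ih =>
        intro x w hw
        obtain ⟨hcone', hgrow'⟩ := hstep x w hw
        obtain ⟨w₂, heq, hcone₂, hgrow₂⟩ := ih (x + α) ((!![((opNorm (A x) : ℝ) : ℂ), 0; 0, (((opNorm (A x))⁻¹ : ℝ) : ℂ)] * !![c x, -(starRingEnd ℂ) (d x); d x, (starRingEnd ℂ) (c x)]) *ᵥ w) hcone'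
        have hxa : x + α + (n : ℕ) * α = x + ((n : ℕ) + 1 : ℕ) * α := by push_cast; ring
        refine ⟨w₂, ?_, hcone₂, ?_⟩
        · rw [cocycleProd_succ, ← Matrix.mulVec_mulVec,
            Matrix.mulVec_mulVec w (A x) (U₃ x), hAU x,
            ← Matrix.mulVec_mulVec w (U₃ (x + α)) (!![((opNorm (A x) : ℝ) : ℂ), 0; 0, (((opNorm (A x))⁻¹ : ℝ) : ℂ)] * !![c x, -(starRingEnd ℂ) (d x); d x, (starRingEnd ℂ) (c x)]), heq, hxa]
        · calc (lam / (2 * ρ)) ^ (n + 1) * vecNorm w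
              = (lam / (2 * ρ)) ^ n * (lam / (2 * ρ) * vecNorm w) := by ring
            _ ≤ (lam / (2 * ρ)) ^ n * vecNorm ((!![((opNorm (A x) : ℝ) : ℂ), 0; 0, (((opNorm (A x))⁻¹ : ℝ) : ℂ)] * !![c x, -(starRingEnd ℂ) (d x); d x, (starRingEnd ℂ) (c x)]) *ᵥ w) :=
                mul_le_mul_of_nonneg_left hgrow' (by positivity)
            _ ≤ vecNorm w₂ := hgrow₂

    have hb2 : ∀ (n : ℕ) (x : ℝ), (lam / (2 * ρ)) ^ n ≤ opNorm (cocycleProd A α n x) := by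
      intro n x
      have hconew : lam * ‖(![((lam : ℝ) : ℂ), 1] : Fin 2 → ℂ) 1‖ ≤
          ‖(![((lam : ℝ) : ℂ), 1] : Fin 2 → ℂ) 0‖ := by
        simp [Complex.norm_real, _root_.abs_of_pos hlam0]
      obtain ⟨w₂, heq, _, hgrow⟩ := key n x ![((lam : ℝ) : ℂ), 1] hconew
      have h1 : vecNorm (cocycleProd A α n x *ᵥ (U₃ x *ᵥ ![((lam : ℝ) : ℂ), 1])) =
          vecNorm w₂ := by
        rw [heq]; exact vecNorm_unitary _ (hU₃ _) _
      have h2 := vecNorm_mulVec_le (cocycleProd A α n x) (U₃ x *ᵥ ![((lam : ℝ) : ℂ), 1])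
      have h3 : vecNorm (U₃ x *ᵥ ![((lam : ℝ) : ℂ), 1]) = vecNorm ![((lam : ℝ) : ℂ), 1] :=
        vecNorm_unitary _ (hU₃ x) _
      have hvw : 0 < vecNorm ![((lam : ℝ) : ℂ), 1] := by
        rw [vecNorm]
        apply Real.sqrt_pos.2
        have : ‖(![((lam : ℝ) : ℂ), 1] : Fin 2 → ℂ) 0‖ = |lam| := by
          simp
        rw [this]
        positivity
      have h4 : (lam / (2 * ρ)) ^ n * vecNorm ![((lam : ℝ) : ℂ), 1] ≤
          opNorm (cocycleProd A α n x) * vecNorm ![((lam : ℝ) : ℂ), 1] := by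
        rw [h3, h1] at h2
        linarith
      exact le_of_mul_le_mul_right h4 hvw
    have hfinal : ∀ n : ℕ+, Real.log lam - Real.log (2 * ρ) ≤
        (1 / (n : ℝ)) * ∫ x in (0:ℝ)..1, Real.log (opNorm (cocycleProd A α n x)) := by
      intro n
      have hpos : (0:ℝ) < lam / (2 * ρ) := by positivity
      have hlog : ∀ x : ℝ, ((n : ℕ) : ℝ) * (Real.log lam - Real.log (2 * ρ)) ≤
          Real.log (opNorm (cocycleProd A α (n : ℕ) x)) := by
        intro x
        have h1 : Real.log ((lam / (2 * ρ)) ^ (n : ℕ)) ≤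
            Real.log (opNorm (cocycleProd A α (n : ℕ) x)) :=
          Real.log_le_log (pow_pos hpos _) (hb2 n x)
        rwa [Real.log_pow, Real.log_div (ne_of_gt hlam0) (by positivity)] at h1
      have hcontM : Continuous fun x : ℝ => cocycleProd A α (n : ℕ) x := by
        unfold cocycleProd
        exact continuous_list_prod _ (fun i _ => hA.comp (continuous_add_right _))
      have hcont : Continuous fun x : ℝ => opNorm (cocycleProd A α (n : ℕ) x) :=
        opNorm_continuous.comp hcontM
      have hInt : IntervalIntegrable
          (fun x => Real.log (opNorm (cocycleProd A α (n : ℕ) x)))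
          MeasureTheory.volume 0 1 :=
        (ContinuousOn.log hcont.continuousOn
          (fun x _ => ne_of_gt (lt_of_lt_of_le (pow_pos hpos _) (hb2 n x)))).intervalIntegrable
      have h2 : ∫ _x in (0:ℝ)..1, ((n : ℕ) : ℝ) * (Real.log lam - Real.log (2 * ρ)) ≤
          ∫ x in (0:ℝ)..1, Real.log (opNorm (cocycleProd A α (n : ℕ) x)) :=
        intervalIntegral.integral_mono_on (by norm_num) intervalIntegrable_const hInt
          (fun x _ => hlog x)
      rw [intervalIntegral.integral_const] at h2
      simp only [sub_zero, one_smul] at h2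
      have hn0 : (0:ℝ) < ((n : ℕ) : ℝ) := by exact_mod_cast n.pos
      have h3 := mul_le_mul_of_nonneg_left h2
        (le_of_lt (show (0:ℝ) < 1 / ((n : ℕ) : ℝ) by positivity))
      rwa [show (1 / ((n : ℕ) : ℝ)) * (((n : ℕ) : ℝ) * (Real.log lam - Real.log (2 * ρ))) =
        Real.log lam - Real.log (2 * ρ) by field_simp] at h3
    unfold lyapRot
    exact le_ciInf hfinal
end

section
/- If α is a Brjuno number and n a positive integer, then nα is a Brjuno number. -/
/-- The continued fraction digits of `α`: `a (k+1) = ⌊1/x_k⌋` where `x_0 = fract α`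
and `x_{k+1} = fract (1/x_k)`. -/
noncomputable def cfDigit (α : ℝ) (k : ℕ) : ℤ :=
  ⌊((fun x : ℝ => Int.fract x⁻¹)^[k] (Int.fract α))⁻¹⌋

/-- The denominators `q_k` of the continued fraction convergents of `α`:
`q 0 = 1`, `q 1 = a 1`, `q (k+2) = a (k+2) q (k+1) + q k`. -/
noncomputable def cfDen (α : ℝ) : ℕ → ℤ
  | 0 => 1
  | 1 => cfDigit α 0
  | (k + 2) => cfDigit α (k + 1) * cfDen α (k + 1) + cfDen α k

/-- `α` is a Brjuno number if it is irrational and `Σ_k (log q_{k+1})/q_k < ∞`. -/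
def Brjuno (α : ℝ) : Prop :=
  Irrational α ∧ Summable (fun k : ℕ => Real.log (cfDen α (k + 1)) / (cfDen α k : ℝ))

namespace BrjunoAux

/-- iterates of the Gauss map starting from `fract α` -/
noncomputable def xit (α : ℝ) (k : ℕ) : ℝ := (fun x : ℝ => Int.fract x⁻¹)^[k] (Int.fract α)

lemma xit_zero (α : ℝ) : xit α 0 = Int.fract α := rfl

lemma xit_succ (α : ℝ) (k : ℕ) : xit α (k + 1) = Int.fract (xit α k)⁻¹ := by
  simp [xit, Function.iterate_succ_apply']

lemma cfDigit_eq (α : ℝ) (k : ℕ) : cfDigit α k = ⌊(xit α k)⁻¹⌋ := rfl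

lemma two_step_ind {P : ℕ → Prop} (h0 : P 0) (h1 : P 1)
    (h : ∀ k, P k → P (k + 1) → P (k + 2)) : ∀ k, P k := by
  have key : ∀ k, P k ∧ P (k + 1) := by
    intro k
    induction k with
    | zero => exact ⟨h0, h1⟩
    | succ m ih => exact ⟨ih.2, h m ih.1 ih.2⟩
  exact fun k => (key k).1

lemma xit_prop {α : ℝ} (hα : Irrational α) (k : ℕ) :
    Irrational (xit α k) ∧ 0 < xit α k ∧ xit α k < 1 := by
  induction k with
  | zero =>
    have h1 : Irrational (Int.fract α) := by
      rw [Int.fract]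
      exact hα.sub_intCast ⌊α⌋
    rw [xit_zero]
    refine ⟨h1, ?_, Int.fract_lt_one α⟩
    rcases eq_or_lt_of_le (Int.fract_nonneg α) with h | h
    · exfalso; rw [← h] at h1; exact h1 ⟨0, by norm_num⟩
    · exact h
  | succ m ih =>
    obtain ⟨hirr, hpos, hlt⟩ := ih
    rw [xit_succ]
    have hinv : Irrational (xit α m)⁻¹ := hirr.inv
    have h1 : Irrational (Int.fract (xit α m)⁻¹) := by
      rw [Int.fract]; exact hinv.sub_intCast _
    refine ⟨h1, ?_, Int.fract_lt_one _⟩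
    rcases eq_or_lt_of_le (Int.fract_nonneg (xit α m)⁻¹) with h | h
    · exfalso; rw [← h] at h1; exact h1 ⟨0, by norm_num⟩
    · exact h

lemma xit_pos {α : ℝ} (hα : Irrational α) (k : ℕ) : 0 < xit α k := (xit_prop hα k).2.1
lemma xit_lt_one {α : ℝ} (hα : Irrational α) (k : ℕ) : xit α k < 1 := (xit_prop hα k).2.2

lemma one_le_digit {α : ℝ} (hα : Irrational α) (k : ℕ) : 1 ≤ cfDigit α k := by
  rw [cfDigit_eq]
  rw [Int.le_floor]
  push_cast
  rw [le_inv_comm₀ one_pos (xit_pos hα k)]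
  simpa using (xit_lt_one hα k).le

/-- the recursion for the iterates: `x_k * x_{k+1} = 1 - a_k * x_k` -/
lemma xit_rec {α : ℝ} (hα : Irrational α) (k : ℕ) :
    xit α k * xit α (k + 1) = 1 - (cfDigit α k : ℝ) * xit α k := by
  have h0 := (xit_pos hα k).ne'
  rw [xit_succ, Int.fract, cfDigit_eq]
  field_simp

lemma q_basic {α : ℝ} (hα : Irrational α) (k : ℕ) :
    1 ≤ cfDen α k ∧ cfDen α k ≤ cfDen α (k + 1) ∧ (k : ℤ) ≤ cfDen α k ∧
      2 * cfDen α k ≤ cfDen α (k + 2) := by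
  induction k using two_step_ind with
  | h0 =>
    have h1 := one_le_digit hα 0
    have h2 := one_le_digit hα 1
    refine ⟨le_refl _, ?_, by norm_num [cfDen], ?_⟩ <;> simp [cfDen] <;> nlinarith
  | h1 =>
    have h1 := one_le_digit hα 0
    have h2 := one_le_digit hα 1
    have h3 := one_le_digit hα 2
    refine ⟨h1, ?_, by simpa [cfDen] using h1, ?_⟩ <;> simp [cfDen] <;>
      nlinarith [mul_le_mul_of_nonneg_right h2 (by linarith : (0:ℤ) ≤ cfDigit α 0),
        mul_le_mul_of_nonneg_right h3 (by nlinarith : (0:ℤ) ≤ cfDigit α 1 * cfDigit α 0 + 1),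
        le_mul_of_one_le_left (by linarith : (0:ℤ) ≤ cfDigit α 0) h2]
  | h k ih1 ih2 =>
    obtain ⟨ha, hb, hc, hd⟩ := ih1
    obtain ⟨ha', hb', hc', hd'⟩ := ih2
    have h3 := one_le_digit hα (k + 2)
    have h4 := one_le_digit hα (k + 3)
    have h5 := one_le_digit hα (k + 1)
    refine ⟨by linarith, ?_, ?_, ?_⟩
    · show cfDen α (k+2) ≤ cfDigit α (k+2) * cfDen α (k+2) + cfDen α (k+1)
      nlinarith
    · push_cast at hc' ⊢
      have : cfDen α (k + 2) = cfDigit α (k+1) * cfDen α (k+1) + cfDen α k := rfl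
      nlinarith [le_mul_of_one_le_left (by linarith : (0:ℤ) ≤ cfDen α (k+1)) h5]
    · show 2 * cfDen α (k+2) ≤ cfDigit α (k+3) * cfDen α (k+3) + cfDen α (k+2)
      have hb'' : cfDen α (k+2) ≤ cfDen α (k+3) := by
        show cfDen α (k+2) ≤ cfDigit α (k+2) * cfDen α (k+2) + cfDen α (k+1)
        nlinarith
      nlinarith

lemma one_le_q {α : ℝ} (hα : Irrational α) (k : ℕ) : 1 ≤ cfDen α k := (q_basic hα k).1
lemma q_mono {α : ℝ} (hα : Irrational α) (k : ℕ) : cfDen α k ≤ cfDen α (k + 1) := (q_basic hα k).2.1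
lemma k_le_q {α : ℝ} (hα : Irrational α) (k : ℕ) : (k : ℤ) ≤ cfDen α k := (q_basic hα k).2.2.1
lemma q_double {α : ℝ} (hα : Irrational α) (k : ℕ) : 2 * cfDen α k ≤ cfDen α (k + 2) := (q_basic hα k).2.2.2

lemma q_mono' {α : ℝ} (hα : Irrational α) {j k : ℕ} (h : j ≤ k) : cfDen α j ≤ cfDen α k := by
  induction k with
  | zero => simp_all
  | succ m ih =>
    rcases Nat.lt_or_ge j (m+1) with h' | h'
    · exact le_trans (ih (by omega)) (q_mono hα m)
    · have : j = m + 1 := by omega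
      subst this; rfl

lemma q_pow {α : ℝ} (hα : Irrational α) (k : ℕ) : (2 : ℤ) ^ (k / 2) ≤ cfDen α k := by
  induction k using two_step_ind with
  | h0 => simp [cfDen]
  | h1 => simpa [cfDen] using one_le_digit hα 0
  | h k ih1 ih2 =>
    have : (k + 2) / 2 = k / 2 + 1 := by omega
    rw [this, pow_succ]
    have := q_double hα k
    nlinarith

lemma q_shift {α : ℝ} (hα : Irrational α) (k : ℕ) :
    ∀ i, (2 : ℤ) ^ (i / 2) * cfDen α k ≤ cfDen α (k + i) := by
  intro i
  induction i using two_step_ind with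
  | h0 => simp
  | h1 => simpa using q_mono hα k
  | h i ih1 ih2 =>
    have : (i + 2) / 2 = i / 2 + 1 := by omega
    rw [this, pow_succ]
    have h1 := q_double hα (k + i)
    have : k + (i + 2) = (k + i) + 2 := by ring
    rw [this]
    nlinarith [one_le_q hα k]

noncomputable def cfNum (α : ℝ) : ℕ → ℤ
  | 0 => 0
  | 1 => 1
  | (k + 2) => cfDigit α (k + 1) * cfNum α (k + 1) + cfNum α k

noncomputable def Pk (α : ℝ) (k : ℕ) : ℝ := ∏ j ∈ Finset.range (k + 1), xit α j

lemma Pk_zero (α : ℝ) : Pk α 0 = xit α 0 := by simp [Pk]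

lemma Pk_succ (α : ℝ) (k : ℕ) : Pk α (k + 1) = Pk α k * xit α (k + 1) := by
  simp [Pk, Finset.prod_range_succ]

lemma Pk_pos {α : ℝ} (hα : Irrational α) (k : ℕ) : 0 < Pk α k :=
  Finset.prod_pos fun j _ => xit_pos hα j

/-- `q_k β - p_k = (-1)^k ∏_{j ≤ k} x_j` -/
lemma identity_D {α : ℝ} (hα : Irrational α) (k : ℕ) :
    (cfDen α k : ℝ) * Int.fract α - (cfNum α k : ℝ) = (-1 : ℝ) ^ k * Pk α k := by
  induction k using two_step_ind with
  | h0 => simp [cfDen, cfNum, Pk_zero, xit_zero]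
  | h1 =>
    have h := xit_rec hα 0
    rw [xit_zero] at h
    have e1 : cfDen α 1 = cfDigit α 0 := rfl
    have e2 : cfNum α 1 = 1 := rfl
    rw [e1, e2, Pk_succ, Pk_zero, xit_zero]
    push_cast
    linear_combination h
  | h k ih1 ih2 =>
    have hq : (cfDen α (k + 2) : ℝ) = (cfDigit α (k+1) : ℝ) * (cfDen α (k+1) : ℝ) + (cfDen α k : ℝ) := by
      push_cast [show cfDen α (k+2) = cfDigit α (k+1) * cfDen α (k+1) + cfDen α k from rfl]; ring
    have hp : (cfNum α (k + 2) : ℝ) = (cfDigit α (k+1) : ℝ) * (cfNum α (k+1) : ℝ) + (cfNum α k : ℝ) := by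
      push_cast [show cfNum α (k+2) = cfDigit α (k+1) * cfNum α (k+1) + cfNum α k from rfl]; ring
    have hr := xit_rec hα (k + 1)
    rw [hq, hp, show ((k:ℕ)+2) = (k+1)+1 from rfl, Pk_succ, Pk_succ,
      show (-1:ℝ)^(k+1+1) = (-1:ℝ)^k from by ring]
    rw [Pk_succ, show (-1:ℝ)^(k+1) = -(-1:ℝ)^k from by ring] at ih2
    linear_combination (cfDigit α (k+1) : ℝ) * ih2 + ih1 - (-1:ℝ)^k * Pk α k * hr

/-- `∏_{j ≤ k} x_j * (q_{k+1} + q_k x_{k+1}) = 1` -/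
lemma identity_P {α : ℝ} (hα : Irrational α) (k : ℕ) :
    Pk α k * ((cfDen α (k + 1) : ℝ) + (cfDen α k : ℝ) * xit α (k + 1)) = 1 := by
  induction k with
  | zero =>
    have h := xit_rec hα 0
    have e1 : cfDen α 1 = cfDigit α 0 := rfl
    have e0 : cfDen α 0 = 1 := rfl
    rw [Pk_zero, e1, e0]
    push_cast
    linear_combination h
  | succ m ih =>
    have hq : (cfDen α (m + 2) : ℝ) = (cfDigit α (m+1) : ℝ) * (cfDen α (m+1) : ℝ) + (cfDen α m : ℝ) := by
      push_cast [show cfDen α (m+2) = cfDigit α (m+1) * cfDen α (m+1) + cfDen α m from rfl]; ring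
    have hr := xit_rec hα (m + 1)
    rw [show ((m:ℕ)+1+1) = m+2 from rfl, hq, Pk_succ]
    linear_combination ih + Pk α m * (cfDen α (m+1) : ℝ) * hr

lemma q_cast_pos {α : ℝ} (hα : Irrational α) (k : ℕ) : (0:ℝ) < (cfDen α k : ℝ) := by
  exact_mod_cast lt_of_lt_of_le one_pos (one_le_q hα k)

lemma Pk_lt {α : ℝ} (hα : Irrational α) (k : ℕ) :
    Pk α k * (cfDen α (k + 1) : ℝ) < 1 := by
  have h := identity_P hα k
  have h1 := Pk_pos hα k
  have h2 := xit_pos hα (k + 1)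
  have h3 := q_cast_pos hα k
  nlinarith [mul_pos (mul_pos h1 h3) h2]

lemma Pk_gt {α : ℝ} (hα : Irrational α) (k : ℕ) :
    1 < Pk α k * (2 * (cfDen α (k + 1) : ℝ)) := by
  have h := identity_P hα k
  have h1 := Pk_pos hα k
  have h2 := xit_lt_one hα (k + 1)
  have h2' := xit_pos hα (k + 1)
  have h3 := q_cast_pos hα k
  have h4 : (cfDen α k : ℝ) ≤ (cfDen α (k+1) : ℝ) := by exact_mod_cast q_mono hα k
  have h5 : (cfDen α k : ℝ) * xit α (k+1) < (cfDen α (k+1) : ℝ) := by nlinarith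
  nlinarith [mul_lt_mul_of_pos_left h5 h1]

lemma det_eq {α : ℝ} (hα : Irrational α) (k : ℕ) :
    cfNum α (k + 1) * cfDen α k - cfNum α k * cfDen α (k + 1) = (-1 : ℤ) ^ k := by
  induction k with
  | zero => simp [cfNum, cfDen]
  | succ m ih =>
    have hq : cfDen α (m+2) = cfDigit α (m+1) * cfDen α (m+1) + cfDen α m := rfl
    have hp : cfNum α (m+2) = cfDigit α (m+1) * cfNum α (m+1) + cfNum α m := rfl
    rw [show ((m:ℕ)+1+1) = m+2 from rfl, hq, hp,
      show (-1:ℤ)^(m+1) = -(-1:ℤ)^m from by ring, ← ih]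
    ring

/-- best approximation: if `1 ≤ m < q_{k+1}` then `|m β - p| ≥ ∏_{j≤k} x_j`. -/
lemma best_approx {α : ℝ} (hα : Irrational α) (k : ℕ) (m p : ℤ)
    (hm : 1 ≤ m) (hm' : m < cfDen α (k + 1)) :
    Pk α k ≤ |(m : ℝ) * Int.fract α - (p : ℝ)| := by
  obtain ⟨X, hX⟩ : ∃ X : ℤ, X = cfNum α (k+1) * m - cfDen α (k+1) * p := ⟨_, rfl⟩
  obtain ⟨Y, hY⟩ : ∃ Y : ℤ, Y = cfDen α k * p - cfNum α k * m := ⟨_, rfl⟩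
  have hdet := det_eq hα k
  have h1 : X * cfDen α k + Y * cfDen α (k+1) = (-1)^k * m := by
    rw [hX, hY]; linear_combination m * hdet
  have h2 : X * cfNum α k + Y * cfNum α (k+1) = (-1)^k * p := by
    rw [hX, hY]; linear_combination p * hdet
  clear hX hY
  have hDk := identity_D hα k
  have hDk1 := identity_D hα (k+1)
  have hPk := Pk_pos hα k
  have hPk1 := Pk_pos hα (k+1)
  have hq1 : (1 : ℤ) ≤ cfDen α k := one_le_q hα k
  have hq2 : (1 : ℤ) ≤ cfDen α (k+1) := one_le_q hα (k+1)
  have e1 : (X : ℝ) * (cfDen α k : ℝ) + (Y : ℝ) * (cfDen α (k+1) : ℝ) = (-1:ℝ)^k * m := by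
    exact_mod_cast congrArg (Int.cast : ℤ → ℝ) h1
  have e2 : (X : ℝ) * (cfNum α k : ℝ) + (Y : ℝ) * (cfNum α (k+1) : ℝ) = (-1:ℝ)^k * p := by
    exact_mod_cast congrArg (Int.cast : ℤ → ℝ) h2
  have hkey : (m : ℝ) * Int.fract α - (p : ℝ) = (X : ℝ) * Pk α k - (Y : ℝ) * Pk α (k+1) := by
    rcases Nat.even_or_odd k with he | ho
    · rw [he.neg_one_pow] at hDk e1 e2
      rw [(Even.add_one he).neg_one_pow] at hDk1
      linear_combination (X:ℝ) * hDk + (Y:ℝ) * hDk1 - Int.fract α * e1 + e2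
    · rw [ho.neg_one_pow] at hDk e1 e2
      rw [(Odd.add_one ho).neg_one_pow] at hDk1
      linear_combination (-(X:ℝ)) * hDk - (Y:ℝ) * hDk1 + Int.fract α * e1 - e2
  rw [hkey]
  clear hkey e1 e2 hDk hDk1 h2 hdet
  have hsm1 : -m ≤ (-1:ℤ)^k * m := by
    rcases Nat.even_or_odd k with he | ho
    · rw [he.neg_one_pow]; linarith
    · rw [ho.neg_one_pow]; linarith
  have hsm2 : (-1:ℤ)^k * m ≤ m := by
    rcases Nat.even_or_odd k with he | ho
    · rw [he.neg_one_pow]; linarith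
    · rw [ho.neg_one_pow]; linarith
  rcases lt_trichotomy Y 0 with hy | hy | hy
  · rcases lt_trichotomy X 0 with hx | hx | hx
    · -- X < 0, Y < 0 : contradiction
      exfalso
      have t1 : X * cfDen α k ≤ -1 * cfDen α k :=
        mul_le_mul_of_nonneg_right (by linarith) (by linarith)
      have t2 : Y * cfDen α (k+1) ≤ -1 * cfDen α (k+1) :=
        mul_le_mul_of_nonneg_right (by linarith) (by linarith)
      linarith
    · -- X = 0
      exfalso
      rw [hx, zero_mul, zero_add] at h1
      have hY1 : 1 ≤ |Y| := Int.one_le_abs (by omega)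
      have h5 : |Y| * |cfDen α (k+1)| = |(-1:ℤ)^k * m| := by rw [← abs_mul, h1]
      rw [abs_mul, abs_pow, abs_neg, abs_one, one_pow, one_mul,
        abs_of_pos (by linarith : (0:ℤ) < m), abs_of_pos (by linarith : (0:ℤ) < cfDen α (k+1))] at h5
      nlinarith
    · -- X > 0, Y < 0
      have hX1 : (1:ℝ) ≤ (X:ℝ) := by exact_mod_cast hx
      have hY1 : (Y:ℝ) ≤ -1 := by exact_mod_cast (by linarith : Y ≤ -1)
      have : Pk α k ≤ (X : ℝ) * Pk α k - (Y : ℝ) * Pk α (k+1) := by nlinarith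
      exact le_trans this (le_abs_self _)
  · -- Y = 0
    have hx : X ≠ 0 := by
      intro h
      rw [h, hy] at h1
      simp only [zero_mul, zero_add] at h1
      have : (-1:ℤ)^k * m = 0 := h1.symm
      rcases Nat.even_or_odd k with he | ho
      · rw [he.neg_one_pow] at this; omega
      · rw [ho.neg_one_pow] at this; omega
    have hXa : (1:ℝ) ≤ |(X:ℝ)| := by
      have := Int.one_le_abs hx
      calc (1:ℝ) ≤ (|X| : ℤ) := by exact_mod_cast this
        _ = |(X:ℝ)| := by push_cast; ring
    rw [hy]
    push_cast
    rw [show ((X:ℝ) * Pk α k - 0 * Pk α (k+1)) = (X:ℝ) * Pk α k from by ring, abs_mul,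
      abs_of_pos hPk]
    nlinarith
  · rcases lt_trichotomy X 0 with hx | hx | hx
    · -- X < 0, Y > 0
      have hX1 : (X:ℝ) ≤ -1 := by exact_mod_cast (by linarith : X ≤ -1)
      have hY1 : (1:ℝ) ≤ (Y:ℝ) := by exact_mod_cast hy
      have hneg : (X : ℝ) * Pk α k - (Y : ℝ) * Pk α (k+1) ≤ -(Pk α k) := by nlinarith
      exact le_trans (by linarith) (neg_le_abs _)
    · -- X = 0
      exfalso
      rw [hx, zero_mul, zero_add] at h1
      have hY1 : 1 ≤ |Y| := Int.one_le_abs (by omega)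
      have h5 : |Y| * |cfDen α (k+1)| = |(-1:ℤ)^k * m| := by rw [← abs_mul, h1]
      rw [abs_mul, abs_pow, abs_neg, abs_one, one_pow, one_mul,
        abs_of_pos (by linarith : (0:ℤ) < m), abs_of_pos (by linarith : (0:ℤ) < cfDen α (k+1))] at h5
      nlinarith
    · -- X > 0, Y > 0
      exfalso
      have t1 : 1 * cfDen α k ≤ X * cfDen α k :=
        mul_le_mul_of_nonneg_right (by linarith) (by linarith)
      have t2 : 1 * cfDen α (k+1) ≤ Y * cfDen α (k+1) :=
        mul_le_mul_of_nonneg_right (by linarith) (by linarith)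
      linarith

lemma geo_pair (M : ℕ) :
    ∑ i ∈ Finset.range (2 * M), ((1:ℝ)/2) ^ (i / 2) ≤ 4 - 4 * ((1:ℝ)/2) ^ M := by
  induction M with
  | zero => simp
  | succ m ih =>
    have h1 : 2 * (m + 1) = (2 * m + 1) + 1 := by ring
    rw [h1, Finset.sum_range_succ, Finset.sum_range_succ]
    have e1 : (2 * m + 1) / 2 = m := by omega
    have e2 : (2 * m) / 2 = m := by omega
    rw [e1, e2, pow_succ]
    have : (0:ℝ) < ((1:ℝ)/2) ^ m := by positivity
    linarith

lemma geo_le (N : ℕ) : ∑ i ∈ Finset.range N, ((1:ℝ)/2) ^ (i / 2) ≤ 4 := by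
  have h1 : ∑ i ∈ Finset.range N, ((1:ℝ)/2) ^ (i / 2)
      ≤ ∑ i ∈ Finset.range (2 * N), ((1:ℝ)/2) ^ (i / 2) := by
    apply Finset.sum_le_sum_of_subset_of_nonneg
    · exact Finset.range_subset_range.mpr (by omega)
    · intro i _ _; positivity
  have h2 := geo_pair N
  have : (0:ℝ) ≤ ((1:ℝ)/2) ^ N := by positivity
  linarith

lemma inv_q_le {α : ℝ} (hα : Irrational α) (k : ℕ) :
    1 / (cfDen α k : ℝ) ≤ ((1:ℝ)/2) ^ (k / 2) := by
  have h1 : ((2:ℝ)) ^ (k / 2) ≤ (cfDen α k : ℝ) := by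
    have := q_pow hα k
    calc ((2:ℝ)) ^ (k / 2) = ((2:ℤ) ^ (k / 2) : ℤ) := by push_cast; ring
      _ ≤ (cfDen α k : ℝ) := by exact_mod_cast this
  have h2 : (0:ℝ) < (2:ℝ) ^ (k / 2) := by positivity
  rw [div_pow, one_pow, div_le_div_iff₀ (q_cast_pos hα k) h2, one_mul]
  linarith

lemma summable_inv_q {α : ℝ} (hα : Irrational α) :
    Summable (fun k : ℕ => 1 / (cfDen α k : ℝ)) := by
  apply summable_of_sum_range_le (c := 4)
  · intro k
    exact div_nonneg zero_le_one (le_of_lt (q_cast_pos hα k))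
  · intro K
    calc ∑ k ∈ Finset.range K, 1 / (cfDen α k : ℝ)
        ≤ ∑ k ∈ Finset.range K, ((1:ℝ)/2) ^ (k / 2) :=
          Finset.sum_le_sum fun k _ => inv_q_le hα k
      _ ≤ 4 := geo_le K

lemma summable_b {α : ℝ} (hα : Brjuno α) :
    Summable (fun j : ℕ => Real.log (2 * (cfDen α (j+1) : ℝ)) / (cfDen α j : ℝ)) := by
  have heq : ∀ j : ℕ, Real.log (2 * (cfDen α (j+1) : ℝ)) / (cfDen α j : ℝ)
      = Real.log 2 * (1 / (cfDen α j : ℝ)) + Real.log (cfDen α (j+1)) / (cfDen α j : ℝ) := by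
    intro j
    rw [Real.log_mul (by norm_num) (ne_of_gt (q_cast_pos hα.1 (j+1)))]
    ring
  rw [funext heq]
  exact ((summable_inv_q hα.1).mul_left _).add hα.2

lemma b_nonneg {α : ℝ} (hα : Irrational α) (j : ℕ) :
    0 ≤ Real.log (2 * (cfDen α (j+1) : ℝ)) / (cfDen α j : ℝ) := by
  apply div_nonneg _ (le_of_lt (q_cast_pos hα j))
  apply Real.log_nonneg
  have := q_cast_pos hα (j+1)
  have : (1:ℝ) ≤ (cfDen α (j+1) : ℝ) := by exact_mod_cast one_le_q hα (j+1)
  linarith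

end BrjunoAux

open BrjunoAux in
/-- If `α` is a Brjuno number and `n` is a positive integer, then `nα` is Brjuno. -/
theorem brjuno_nat_mul (α : ℝ) (n : ℕ) (hn : 0 < n) (hα : Brjuno α) :
    Brjuno (n * α) := by
  classical
  obtain ⟨hirr, hsum⟩ := hα
  have hγ : Irrational ((n : ℝ) * α) := (irrational_natCast_mul_iff).mpr ⟨hn.ne', hirr⟩
  set γ : ℝ := (n : ℝ) * α with hγdef
  refine ⟨hγ, ?_⟩
  have hQpos : ∀ k, (0:ℝ) < (cfDen γ k : ℝ) := fun k => q_cast_pos hγ k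
  have hqpos : ∀ j, (0:ℝ) < (cfDen α j : ℝ) := fun j => q_cast_pos hirr j
  have hn1 : (1:ℤ) ≤ (n:ℤ) := by exact_mod_cast hn
  -- existence of an index j with n Q_k < q_{j+1}
  have hex : ∀ k : ℕ, ∃ j : ℕ, (n:ℤ) * cfDen γ k < cfDen α (j + 1) := by
    intro k
    refine ⟨((n:ℤ) * cfDen γ k).toNat, ?_⟩
    have h0 : (1:ℤ) ≤ cfDen γ k := one_le_q hγ k
    have h1 : (0:ℤ) ≤ (n:ℤ) * cfDen γ k := by nlinarith
    have h2 := k_le_q hirr (((n:ℤ) * cfDen γ k).toNat + 1)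
    have h3 : ((((n:ℤ) * cfDen γ k).toNat + 1 : ℕ) : ℤ) = (n:ℤ) * cfDen γ k + 1 := by
      push_cast
      rw [Int.toNat_of_nonneg h1]
    rw [h3] at h2
    linarith
  set J : ℕ → ℕ := fun k => Nat.find (hex k) with hJdef
  have hJ1 : ∀ k, (n:ℤ) * cfDen γ k < cfDen α (J k + 1) := fun k => Nat.find_spec (hex k)
  have hJ2 : ∀ k, cfDen α (J k) ≤ (n:ℤ) * cfDen γ k := by
    intro k
    rcases Nat.eq_zero_or_pos (J k) with h | h
    · rw [h]
      have h0 : (1:ℤ) ≤ cfDen γ k := one_le_q hγ k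
      have : cfDen α 0 = 1 := rfl
      rw [this]
      nlinarith
    · have hmin := Nat.find_min (hex k) (show J k - 1 < J k by omega)
      rw [show (J k - 1) + 1 = J k by omega] at hmin
      exact not_lt.mp hmin
  have hm1 : ∀ k, (1:ℤ) ≤ (n:ℤ) * cfDen γ k := by
    intro k
    have h0 : (1:ℤ) ≤ cfDen γ k := one_le_q hγ k
    nlinarith
  -- the main inequality `Q_{k+1} < 2 q_{J k + 1}`
  have hmain : ∀ k, cfDen γ (k+1) < 2 * cfDen α (J k + 1) := by
    intro k
    have hDγ := identity_D hγ k
    have habs : |(cfDen γ k : ℝ) * Int.fract γ - (cfNum γ k : ℝ)| = Pk γ k := by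
      rw [hDγ]
      rcases Nat.even_or_odd k with he | ho
      · rw [he.neg_one_pow, one_mul, abs_of_pos (Pk_pos hγ k)]
      · rw [ho.neg_one_pow, neg_one_mul, abs_neg, abs_of_pos (Pk_pos hγ k)]
    have hrew : (cfDen γ k : ℝ) * Int.fract γ - (cfNum γ k : ℝ)
        = (((n:ℤ) * cfDen γ k : ℤ) : ℝ) * Int.fract α
          - ((cfNum γ k + cfDen γ k * ⌊γ⌋ - (n:ℤ) * cfDen γ k * ⌊α⌋ : ℤ) : ℝ) := by
      simp only [Int.fract]
      push_cast
      rw [hγdef]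
      ring
    have hba := best_approx hirr (J k) ((n:ℤ) * cfDen γ k)
      (cfNum γ k + cfDen γ k * ⌊γ⌋ - (n:ℤ) * cfDen γ k * ⌊α⌋) (hm1 k) (hJ1 k)
    rw [← hrew, habs] at hba
    have h5 := Pk_lt hγ k
    have h6 := Pk_gt hirr (J k)
    have hp := Pk_pos hγ k
    have hq := hqpos (J k + 1)
    have h8 : (cfDen γ (k+1) : ℝ) < 2 * (cfDen α (J k + 1) : ℝ) := by
      nlinarith [mul_le_mul_of_nonneg_right hba (by linarith : (0:ℝ) ≤ 2 * (cfDen α (J k + 1) : ℝ))]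
    exact_mod_cast h8
  -- summability
  apply summable_of_sum_range_le
    (c := (4 * n) * ∑' j, Real.log (2 * (cfDen α (j+1) : ℝ)) / (cfDen α j : ℝ))
  · intro k
    apply div_nonneg _ (le_of_lt (hQpos k))
    apply Real.log_nonneg
    exact_mod_cast one_le_q hγ (k+1)
  · intro K
    have step1 : ∀ k, Real.log (cfDen γ (k+1)) / (cfDen γ k : ℝ)
        ≤ Real.log (2 * (cfDen α (J k + 1) : ℝ)) * (1 / (cfDen γ k : ℝ)) := by
      intro k
      rw [mul_one_div]
      apply (div_le_div_iff_of_pos_right (hQpos k)).mpr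
      apply Real.log_le_log (hQpos (k+1))
      exact_mod_cast le_of_lt (hmain k)
    have hlognn : ∀ j : ℕ, 0 ≤ Real.log (2 * (cfDen α (j + 1) : ℝ)) := by
      intro j
      apply Real.log_nonneg
      have := hqpos (j+1)
      have h1 : (1:ℝ) ≤ (cfDen α (j+1) : ℝ) := by exact_mod_cast one_le_q hirr (j+1)
      linarith
    calc ∑ k ∈ Finset.range K, Real.log (cfDen γ (k+1)) / (cfDen γ k : ℝ)
        ≤ ∑ k ∈ Finset.range K,
            Real.log (2 * (cfDen α (J k + 1) : ℝ)) * (1 / (cfDen γ k : ℝ)) :=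
          Finset.sum_le_sum fun k _ => step1 k
      _ = ∑ j ∈ (Finset.range K).image J,
            ∑ k ∈ (Finset.range K).filter (fun k => J k = j),
              Real.log (2 * (cfDen α (J k + 1) : ℝ)) * (1 / (cfDen γ k : ℝ)) :=
          (Finset.sum_fiberwise_of_maps_to (fun k hk => Finset.mem_image_of_mem J hk) _).symm
      _ ≤ ∑ j ∈ (Finset.range K).image J,
            (4 * n) * (Real.log (2 * (cfDen α (j + 1) : ℝ)) / (cfDen α j : ℝ)) := by
          apply Finset.sum_le_sum
          intro j hj
          have hne : ((Finset.range K).filter (fun k => J k = j)).Nonempty := by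
            obtain ⟨k, hk, hkj⟩ := Finset.mem_image.mp hj
            exact ⟨k, Finset.mem_filter.mpr ⟨hk, hkj⟩⟩
          set F := (Finset.range K).filter (fun k => J k = j) with hF
          set k₀ := F.min' hne with hk₀def
          have hk₀ : k₀ ∈ F := F.min'_mem hne
          have hk₀r : k₀ ∈ Finset.range K := (Finset.mem_filter.mp hk₀).1
          have hk₀j : J k₀ = j := (Finset.mem_filter.mp hk₀).2
          have hterm : ∀ k ∈ F, Real.log (2 * (cfDen α (J k + 1) : ℝ)) * (1 / (cfDen γ k : ℝ))
              = Real.log (2 * (cfDen α (j + 1) : ℝ)) * (1 / (cfDen γ k : ℝ)) := by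
            intro k hk
            rw [(Finset.mem_filter.mp hk).2]
          rw [Finset.sum_congr rfl hterm, ← Finset.mul_sum]
          have hsum1 : ∑ k ∈ F, (1 / (cfDen γ k : ℝ)) ≤ 4 * (1 / (cfDen γ k₀ : ℝ)) := by
            calc ∑ k ∈ F, (1 / (cfDen γ k : ℝ))
                ≤ ∑ k ∈ Finset.Ico k₀ K, (1 / (cfDen γ k : ℝ)) := by
                  apply Finset.sum_le_sum_of_subset_of_nonneg
                  · intro k hk
                    exact Finset.mem_Ico.mpr ⟨F.min'_le k hk,
                      Finset.mem_range.mp (Finset.mem_filter.mp hk).1⟩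
                  · intro k _ _
                    exact div_nonneg zero_le_one (le_of_lt (hQpos k))
              _ = ∑ i ∈ Finset.range (K - k₀), (1 / (cfDen γ (k₀ + i) : ℝ)) := by
                  rw [Finset.sum_Ico_eq_sum_range]
              _ ≤ ∑ i ∈ Finset.range (K - k₀), ((1:ℝ)/2) ^ (i / 2) * (1 / (cfDen γ k₀ : ℝ)) := by
                  apply Finset.sum_le_sum
                  intro i _
                  have hs := q_shift hγ k₀ i
                  have h2i : (0:ℝ) < (2:ℝ) ^ (i / 2) := by positivity
                  have hcast : ((2:ℝ)) ^ (i / 2) * (cfDen γ k₀ : ℝ) ≤ (cfDen γ (k₀ + i) : ℝ) := by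
                    calc ((2:ℝ)) ^ (i / 2) * (cfDen γ k₀ : ℝ)
                        = (((2:ℤ) ^ (i / 2) * cfDen γ k₀ : ℤ) : ℝ) := by push_cast; ring
                      _ ≤ _ := by exact_mod_cast hs
                  have h9 := one_div_le_one_div_of_le (mul_pos h2i (hQpos k₀)) hcast
                  calc (1 : ℝ) / (cfDen γ (k₀ + i) : ℝ)
                      ≤ 1 / ((2:ℝ) ^ (i / 2) * (cfDen γ k₀ : ℝ)) := h9
                    _ = ((1:ℝ)/2) ^ (i / 2) * (1 / (cfDen γ k₀ : ℝ)) := by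
                        rw [div_pow, one_pow, div_mul_div_comm, one_mul]
              _ ≤ 4 * (1 / (cfDen γ k₀ : ℝ)) := by
                  rw [← Finset.sum_mul]
                  exact mul_le_mul_of_nonneg_right (geo_le _)
                    (div_nonneg zero_le_one (le_of_lt (hQpos k₀)))
          have hq0 : (cfDen α j : ℝ) ≤ (n:ℝ) * (cfDen γ k₀ : ℝ) := by
            have h := hJ2 k₀
            rw [hk₀j] at h
            exact_mod_cast h
          have h1n : 1 / (cfDen γ k₀ : ℝ) ≤ (n:ℝ) / (cfDen α j : ℝ) := by
            rw [div_le_div_iff₀ (hQpos k₀) (hqpos j)]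
            linarith
          calc Real.log (2 * (cfDen α (j + 1) : ℝ)) * ∑ k ∈ F, (1 / (cfDen γ k : ℝ))
              ≤ Real.log (2 * (cfDen α (j + 1) : ℝ)) * (4 * ((n:ℝ) / (cfDen α j : ℝ))) := by
                apply mul_le_mul_of_nonneg_left _ (hlognn j)
                calc ∑ k ∈ F, (1 / (cfDen γ k : ℝ)) ≤ 4 * (1 / (cfDen γ k₀ : ℝ)) := hsum1
                  _ ≤ 4 * ((n:ℝ) / (cfDen α j : ℝ)) := by linarith
            _ = (4 * n) * (Real.log (2 * (cfDen α (j + 1) : ℝ)) / (cfDen α j : ℝ)) := by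
                ring
      _ = (4 * n) * ∑ j ∈ (Finset.range K).image J,
            (Real.log (2 * (cfDen α (j + 1) : ℝ)) / (cfDen α j : ℝ)) := by
          rw [Finset.mul_sum]
      _ ≤ (4 * n) * ∑' j, Real.log (2 * (cfDen α (j+1) : ℝ)) / (cfDen α j : ℝ) := by
          apply mul_le_mul_of_nonneg_left _ (by positivity)
          exact Summable.sum_le_tsum _ (fun j _ => b_nonneg hirr j) (summable_b ⟨hirr, hsum⟩)
end
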